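/- Let A₀ and A₁ be n × n Hermitian complex matrices with A₀² = I and A₁² = I (i.e. Hermitian matrices with eigenvalues ±1). Then there exists a finite family of pairwise orthogonal projections {P_i} on ℂⁿ with Σ_i P_i = I, each of rank at most 2, such that every P_i commutes with both A₀ and A₁ (equivalently, A₀ = ⊕_i A₀^i and A₁ = ⊕_i A₁^i where A₀^i, A₁^i act within the range of P_i). -/

import Mathlib

open Matrix Submodule Module

noncomputable section

set_option linter.unusedSectionVars false

variable {E : Type*} [NormedAddCommGroup E] [InnerProductSpace ℂ E] [FiniteDimensional ℂ E]

/-- A symmetric operator leaving a subspace invariant leaves its orthogonal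
complement invariant. -/
lemma orth_invariant (T : E →ₗ[ℂ] E) (hT : T.IsSymmetric) (W : Submodule ℂ E)
    (hW : ∀ x ∈ W, T x ∈ W) : ∀ x ∈ Wᗮ, T x ∈ Wᗮ := by
  intro x hx u hu
  have := hT u x
  rw [← this]
  exact hx (T u) (hW u hu)

lemma exists_split (T0 T1 : E →ₗ[ℂ] E)
    (hs0 : T0.IsSymmetric) (hs1 : T1.IsSymmetric)
    (h0 : ∀ x, T0 (T0 x) = x) (h1 : ∀ x, T1 (T1 x) = x) :
    ∀ (N : ℕ) (V : Submodule ℂ E), finrank ℂ V ≤ N →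
      (∀ x ∈ V, T0 x ∈ V) → (∀ x ∈ V, T1 x ∈ V) →
    ∃ (k : ℕ) (W : Fin k → Submodule ℂ E),
      (∀ i, finrank ℂ (W i) ≤ 2) ∧
      (∀ i, ∀ x ∈ W i, T0 x ∈ W i) ∧
      (∀ i, ∀ x ∈ W i, T1 x ∈ W i) ∧
      (∀ i j, i ≠ j → W i ⟂ W j) ∧
      (⨆ i, W i) = V := by
  intro N
  induction N with
  | zero =>
    intro V hV _ _
    refine ⟨0, Fin.elim0, fun i => i.elim0, fun i => i.elim0, fun i => i.elim0,
      fun i => i.elim0, ?_⟩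
    rw [iSup_of_empty]
    exact (Submodule.finrank_eq_zero.mp (Nat.le_zero.mp hV)).symm
  | succ N ih =>
    intro V hV hV0 hV1
    by_cases hbot : V = ⊥
    · refine ⟨0, Fin.elim0, fun i => i.elim0, fun i => i.elim0, fun i => i.elim0,
        fun i => i.elim0, ?_⟩
      rw [iSup_of_empty, hbot]
    -- find an eigenvector of T0 ∘ T1 inside V
    have hne : Nontrivial V := Submodule.nontrivial_iff_ne_bot.mpr hbot
    have hUV : ∀ x ∈ V, (T0 ∘ₗ T1) x ∈ V := fun x hx => hV0 _ (hV1 x hx)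
    obtain ⟨μ, hμ⟩ := Module.End.exists_eigenvalue ((T0 ∘ₗ T1).restrict hUV)
    obtain ⟨v, hv⟩ := hμ.exists_hasEigenvector
    set w : E := (v : E) with hwdef
    have hw0 : w ≠ 0 := fun h => hv.right (Subtype.coe_injective h)
    have hwV : w ∈ V := v.2
    have hUw : T0 (T1 w) = μ • w := by
      have := congrArg (Subtype.val) hv.apply_eq_smul
      simpa [LinearMap.restrict_apply] using this
    have hT1w : T1 w = μ • T0 w := by
      have := congrArg T0 hUw
      rw [h0] at this
      rw [this, LinearMap.map_smul]
    have hμ0 : μ ≠ 0 := by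
      intro h
      rw [h, zero_smul] at hUw
      have : T1 (T0 (T0 (T1 w))) = T1 (T0 0) := by rw [hUw]
      rw [h0, h1, map_zero, map_zero] at this
      exact hw0 this
    have hT1T0w : T1 (T0 w) = μ⁻¹ • w := by
      have h2 : T1 (T0 (T0 (T1 w))) = w := by rw [h0, h1]
      rw [hUw, LinearMap.map_smul, LinearMap.map_smul] at h2
      have h3 : μ⁻¹ • (μ • T1 (T0 w)) = μ⁻¹ • w := by rw [h2]
      rw [smul_smul, inv_mul_cancel₀ hμ0, one_smul] at h3
      exact h3
    set W : Submodule ℂ E := span ℂ {w, T0 w} with hWdef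
    have hwW : w ∈ W := subset_span (by simp)
    have hT0wW : T0 w ∈ W := subset_span (by simp)
    have hW0 : ∀ x ∈ W, T0 x ∈ W := by
      intro x hx
      have : W.map T0 ≤ W := by
        rw [hWdef, Submodule.map_span, Submodule.span_le]
        rintro y ⟨x, hx, rfl⟩
        rcases hx with rfl | rfl
        · exact hT0wW
        · rw [h0]; exact hwW
      exact this ⟨x, hx, rfl⟩
    have hW1 : ∀ x ∈ W, T1 x ∈ W := by
      intro x hx
      have : W.map T1 ≤ W := by
        rw [hWdef, Submodule.map_span, Submodule.span_le]
        rintro y ⟨x, hx, rfl⟩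
        rcases hx with rfl | rfl
        · rw [hT1w]; exact W.smul_mem _ hT0wW
        · rw [hT1T0w]; exact W.smul_mem _ hwW
      exact this ⟨x, hx, rfl⟩
    have hWV : W ≤ V := by
      rw [hWdef, Submodule.span_le]
      rintro y (rfl | rfl)
      · exact hwV
      · exact hV0 _ hwV
    have hWrank : finrank ℂ W ≤ 2 := by
      classical
      refine le_trans (finrank_span_le_card _) ?_
      simp [Set.toFinset_insert]
      exact Finset.card_insert_le _ _
    have hWne : finrank ℂ W ≠ 0 := by
      intro h
      rw [Submodule.finrank_eq_zero] at h
      rw [h] at hwW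
      exact hw0 hwW
    -- the orthogonal complement inside V
    set V' : Submodule ℂ E := Wᗮ ⊓ V with hV'def
    have hV'0 : ∀ x ∈ V', T0 x ∈ V' :=
      fun x hx => ⟨orth_invariant T0 hs0 W hW0 x hx.1, hV0 x hx.2⟩
    have hV'1 : ∀ x ∈ V', T1 x ∈ V' :=
      fun x hx => ⟨orth_invariant T1 hs1 W hW1 x hx.1, hV1 x hx.2⟩
    have hdim : finrank ℂ W + finrank ℂ V' = finrank ℂ V :=
      Submodule.finrank_add_inf_finrank_orthogonal hWV
    have hV'N : finrank ℂ V' ≤ N := by omega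
    obtain ⟨k, W', hr', h0', h1', ho', hs'⟩ := ih V' hV'N hV'0 hV'1
    set WW : Fin (k + 1) → Submodule ℂ E := Fin.cons W W' with hWWdef
    have hWW0 : WW 0 = W := rfl
    have hWWs : ∀ j, WW j.succ = W' j := fun j => rfl
    refine ⟨k + 1, WW, ?_, ?_, ?_, ?_, ?_⟩
    · intro i
      rcases Fin.eq_zero_or_eq_succ i with rfl | ⟨j, rfl⟩
      · rw [hWW0]; exact hWrank
      · rw [hWWs]; exact hr' j
    · intro i
      rcases Fin.eq_zero_or_eq_succ i with rfl | ⟨j, rfl⟩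
      · rw [hWW0]; exact hW0
      · rw [hWWs]; exact h0' j
    · intro i
      rcases Fin.eq_zero_or_eq_succ i with rfl | ⟨j, rfl⟩
      · rw [hWW0]; exact hW1
      · rw [hWWs]; exact h1' j
    · intro i j hij
      have hle : ∀ j, W' j ≤ Wᗮ :=
        fun j => le_trans (le_iSup W' j) (by rw [hs']; exact inf_le_left)
      rcases Fin.eq_zero_or_eq_succ i with rfl | ⟨i', rfl⟩ <;>
        rcases Fin.eq_zero_or_eq_succ j with rfl | ⟨j', rfl⟩
      · exact absurd rfl hij
      · rw [hWW0, hWWs]; exact (Submodule.IsOrtho.symm (hle j'))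
      · rw [hWW0, hWWs]; exact hle i'
      · have hne' : i' ≠ j' := fun h => hij (by rw [h])
        rw [hWWs, hWWs]; exact ho' i' j' hne'
    · have hic : (⨆ i, WW i) = W ⊔ ⨆ j, W' j := by
        apply le_antisymm
        · refine iSup_le fun i => ?_
          rcases Fin.eq_zero_or_eq_succ i with rfl | ⟨j, rfl⟩
          · rw [hWW0]; exact le_sup_left
          · rw [hWWs]; exact le_trans (le_iSup W' j) le_sup_right
        · refine sup_le (le_of_eq_of_le hWW0.symm (le_iSup WW 0)) (iSup_le fun j => ?_)
          exact le_of_eq_of_le (hWWs j).symm (le_iSup WW j.succ)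
      rw [hic, hs', hV'def]
      exact Submodule.sup_orthogonal_inf_of_hasOrthogonalProjection hWV

/-- **Lemma of Masanes:** two ±1-valued Hermitian observables on `ℂⁿ` can be
simultaneously block-diagonalized into blocks of dimension at most 2: there is a
finite family of pairwise orthogonal projections, of rank at most 2, summing to
the identity, each commuting with both observables. -/
theorem jordan_blocks_of_two_pm_one_observables
    (n : ℕ) (A0 A1 : Matrix (Fin n) (Fin n) ℂ)
    (h0 : A0.IsHermitian) (h1 : A1.IsHermitian)
    (h0sq : A0 * A0 = 1) (h1sq : A1 * A1 = 1) :
    ∃ (k : ℕ) (P : Fin k → Matrix (Fin n) (Fin n) ℂ),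
      (∀ i, (P i).IsHermitian) ∧
      (∀ i, P i * P i = P i) ∧
      (∀ i j, i ≠ j → P i * P j = 0) ∧
      (∑ i, P i) = 1 ∧
      (∀ i, (P i).rank ≤ 2) ∧
      (∀ i, P i * A0 = A0 * P i) ∧
      (∀ i, P i * A1 = A1 * P i) := by
  classical
  set T0 : EuclideanSpace ℂ (Fin n) →ₗ[ℂ] EuclideanSpace ℂ (Fin n) := toEuclideanLin A0 with hT0
  set T1 : EuclideanSpace ℂ (Fin n) →ₗ[ℂ] EuclideanSpace ℂ (Fin n) := toEuclideanLin A1 with hT1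
  have hmul : ∀ A B : Matrix (Fin n) (Fin n) ℂ,
      toEuclideanLin (A * B) = toEuclideanLin A ∘ₗ toEuclideanLin B := by
    intro A B
    simp only [toEuclideanLin_eq_toLin]
    exact Matrix.toLin_mul _ _ _ A B
  have hone : toEuclideanLin (1 : Matrix (Fin n) (Fin n) ℂ) = LinearMap.id := by
    simp only [toEuclideanLin_eq_toLin]
    exact Matrix.toLin_one _
  have hs0 : T0.IsSymmetric := isHermitian_iff_isSymmetric.mp h0
  have hs1 : T1.IsSymmetric := isHermitian_iff_isSymmetric.mp h1
  have hsq0 : ∀ x, T0 (T0 x) = x := by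
    intro x
    have := congrArg (fun f => f x) (by rw [hT0, ← hmul, h0sq, hone] :
      T0 ∘ₗ T0 = LinearMap.id)
    simpa using this
  have hsq1 : ∀ x, T1 (T1 x) = x := by
    intro x
    have := congrArg (fun f => f x) (by rw [hT1, ← hmul, h1sq, hone] :
      T1 ∘ₗ T1 = LinearMap.id)
    simpa using this
  obtain ⟨k, W, hrk, hi0, hi1, hort, hsup⟩ :=
    exists_split T0 T1 hs0 hs1 hsq0 hsq1 (finrank ℂ (EuclideanSpace ℂ (Fin n))) ⊤
      (le_of_eq (finrank_top ℂ _)) (fun x _ => trivial) (fun x _ => trivial)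
  -- the projections as linear maps
  set Q : Fin k → (EuclideanSpace ℂ (Fin n) →ₗ[ℂ] EuclideanSpace ℂ (Fin n)) :=
    fun i => (W i).subtype ∘ₗ (orthogonalProjection (W i) :
      EuclideanSpace ℂ (Fin n) →ₗ[ℂ] W i) with hQ
  have hQapp : ∀ i x, Q i x = (orthogonalProjection (W i) x : EuclideanSpace ℂ (Fin n)) :=
    fun i x => rfl
  have hQmem : ∀ i x, Q i x ∈ W i := fun i x => (orthogonalProjection (W i) x).2
  have hQid : ∀ i x, x ∈ W i → Q i x = x := by
    intro i x hx
    rw [hQapp]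
    exact Submodule.starProjection_eq_self_iff.mpr hx
  have hQzero : ∀ i x, x ∈ (W i)ᗮ → Q i x = 0 := by
    intro i x hx
    rw [hQapp, orthogonalProjection_mem_subspace_orthogonalComplement_eq_zero hx]
    simp
  have hQsymm : ∀ i, (Q i).IsSymmetric := fun i => Submodule.starProjection_isSymmetric (W i)
  set P : Fin k → Matrix (Fin n) (Fin n) ℂ := fun i => toEuclideanLin.symm (Q i) with hP
  have hPQ : ∀ i, toEuclideanLin (P i) = Q i := fun i => toEuclideanLin.apply_symm_apply _
  have hinj : Function.Injective (toEuclideanLin :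
      Matrix (Fin n) (Fin n) ℂ → (EuclideanSpace ℂ (Fin n) →ₗ[ℂ] EuclideanSpace ℂ (Fin n))) :=
    toEuclideanLin.injective
  refine ⟨k, P, ?_, ?_, ?_, ?_, ?_, ?_, ?_⟩
  · intro i
    rw [isHermitian_iff_isSymmetric, hPQ]
    exact hQsymm i
  · intro i
    apply hinj
    simp only [hmul, hPQ]
    refine LinearMap.ext fun x => ?_
    exact hQid i (Q i x) (hQmem i x)
  · intro i j hij
    apply hinj
    simp only [hmul, hPQ, map_zero]
    refine LinearMap.ext fun x => ?_
    show Q i (Q j x) = 0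
    exact hQzero i (Q j x) ((hort j i (Ne.symm hij)) (hQmem j x))
  · apply hinj
    rw [map_sum, hone]
    have : ∀ i, toEuclideanLin (P i) = Q i := hPQ
    simp_rw [this]
    -- ∑ Q i = id, since it holds on each W j and ⨆ W j = ⊤
    have hker : ∀ j, W j ≤ LinearMap.ker ((∑ i, Q i) - LinearMap.id) := by
      intro j x hx
      rw [LinearMap.mem_ker, LinearMap.sub_apply, LinearMap.id_apply, sub_eq_zero,
        LinearMap.sum_apply]
      rw [Finset.sum_eq_single j]
      · exact hQid j x hx
      · intro i _ hij
        exact hQzero i x ((hort j i (fun h => hij h.symm)) hx)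
      · intro h
        exact absurd (Finset.mem_univ j) h
    have htop : (⊤ : Submodule ℂ (EuclideanSpace ℂ (Fin n))) ≤
        LinearMap.ker ((∑ i, Q i) - LinearMap.id) := by
      rw [← hsup]
      exact iSup_le hker
    refine LinearMap.ext fun x => ?_
    have := htop (Submodule.mem_top (x := x))
    rw [LinearMap.mem_ker, LinearMap.sub_apply, LinearMap.id_apply, sub_eq_zero] at this
    exact this
  · intro i
    have hrange : LinearMap.range (Q i) = W i := by
      apply le_antisymm
      · rintro y ⟨x, rfl⟩
        exact hQmem i x
      · intro x hx
        exact ⟨x, hQid i x hx⟩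
    rw [Matrix.rank_eq_finrank_range_toLin (P i) (PiLp.basisFun 2 ℂ (Fin n))
      (PiLp.basisFun 2 ℂ (Fin n))]
    rw [← toEuclideanLin_eq_toLin, hPQ, hrange]
    exact hrk i
  · intro i
    apply hinj
    simp only [hmul, hPQ]
    show Q i ∘ₗ T0 = T0 ∘ₗ Q i
    refine LinearMap.ext fun x => ?_
    show Q i (T0 x) = T0 (Q i x)
    have hd : x = Q i x + (x - Q i x) := by abel
    have hxm : x - Q i x ∈ (W i)ᗮ := Submodule.sub_starProjection_mem_orthogonal (K := W i) x
    calc Q i (T0 x) = Q i (T0 (Q i x + (x - Q i x))) := by rw [← hd]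
      _ = Q i (T0 (Q i x)) + Q i (T0 (x - Q i x)) := by rw [map_add, map_add]
      _ = T0 (Q i x) + 0 := by
          rw [hQid i _ (hi0 i _ (hQmem i x)),
            hQzero i _ (orth_invariant T0 hs0 (W i) (hi0 i) _ hxm)]
      _ = T0 (Q i x) := by rw [add_zero]
  · intro i
    apply hinj
    simp only [hmul, hPQ]
    show Q i ∘ₗ T1 = T1 ∘ₗ Q i
    refine LinearMap.ext fun x => ?_
    show Q i (T1 x) = T1 (Q i x)
    have hd : x = Q i x + (x - Q i x) := by abel
    have hxm : x - Q i x ∈ (W i)ᗮ := Submodule.sub_starProjection_mem_orthogonal (K := W i) x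
    calc Q i (T1 x) = Q i (T1 (Q i x + (x - Q i x))) := by rw [← hd]
      _ = Q i (T1 (Q i x)) + Q i (T1 (x - Q i x)) := by rw [map_add, map_add]
      _ = T1 (Q i x) + 0 := by
          rw [hQid i _ (hi1 i _ (hQmem i x)),
            hQzero i _ (orth_invariant T1 hs1 (W i) (hi1 i) _ hxm)]
      _ = T1 (Q i x) := by rw [add_zero]
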